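/- Let Φ be a TH system on V. Let {v_i}_{i=0}^d be a basis of V and C (resp. C*) the matrix representing A (resp. A*) with respect to it. Then {v_i} is a Φ-split basis if and only if: (i) C is lower bidiagonal and C* is upper bidiagonal, (ii) C*_{i-1,i} = 1 for 1 ≤ i ≤ d, and (iii) C_{dd} = θ_0 and C*_{00} = θ*_0. -/

import Mathlib

section Helpers
variable {K V : Type*} [Field K] [AddCommGroup V] [Module K V] {d : ℕ}
variable {E : Fin (d + 1) → Module.End K V} {θ : Fin (d + 1) → K} {A : Module.End K V}

lemma th_proj (hmul : ∀ i j, E i * E j = if i = j then E i else 0) (i j : Fin (d + 1)) (x : V) :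
    E i (E j x) = if i = j then E j x else 0 := by
  have h := congrFun (congrArg DFunLike.coe (hmul i j)) x
  by_cases hij : i = j
  · subst hij; simpa [Module.End.mul_apply] using h
  · simpa [hij, Module.End.mul_apply] using h

lemma th_sum (hsum : ∑ i, E i = 1) (x : V) : ∑ i, E i x = x := by
  have h := congrFun (congrArg DFunLike.coe hsum) x
  simpa using h

lemma th_A_proj (hA : A = ∑ i, θ i • E i) (hmul : ∀ i j, E i * E j = if i = j then E i else 0)
    (k : Fin (d + 1)) (x : V) : A (E k x) = θ k • E k x := by
  rw [hA]
  simp only [LinearMap.sum_apply, LinearMap.smul_apply, th_proj hmul, smul_ite, smul_zero]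
  simp

lemma th_proj_A (hA : A = ∑ i, θ i • E i) (hmul : ∀ i j, E i * E j = if i = j then E i else 0)
    (k : Fin (d + 1)) (x : V) : E k (A x) = θ k • E k x := by
  rw [hA]
  simp only [LinearMap.sum_apply, LinearMap.smul_apply, map_sum, map_smul, th_proj hmul,
    smul_ite, smul_zero]
  simp

lemma th_eig (hA : A = ∑ i, θ i • E i) (hmul : ∀ i j, E i * E j = if i = j then E i else 0)
    (hinj : Function.Injective θ) {x : V} {j : Fin (d + 1)} (hx : A x = θ j • x) :
    ∀ k, k ≠ j → E k x = 0 := by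
  intro k hk
  have h1 : θ k • E k x = θ j • E k x := by
    rw [← th_proj_A hA hmul, hx, map_smul]
  have h2 : (θ k - θ j) • E k x = 0 := by rw [sub_smul, h1, sub_self]
  rcases smul_eq_zero.1 h2 with h | h
  · exact absurd (sub_eq_zero.1 h) (fun hh => hk (hinj hh))
  · exact h

lemma th_self (hsum : ∑ i, E i = 1) {x : V} {j : Fin (d + 1)}
    (h : ∀ k, k ≠ j → E k x = 0) : E j x = x := by
  conv_rhs => rw [← th_sum hsum x]
  exact (Finset.sum_eq_single j (fun k _ hk => h k hk)
    (fun hj => absurd (Finset.mem_univ j) hj)).symm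

lemma th_EA_zero {B : Module.End K V} (hsum : ∑ i, E i = 1)
    (hz : ∀ i j : Fin (d + 1), (j : ℕ) + 1 < (i : ℕ) → E i * B * E j = 0)
    {m : ℕ} {x : V} (hx : ∀ l : Fin (d + 1), m < (l : ℕ) → E l x = 0)
    {k : Fin (d + 1)} (hk : m + 1 < (k : ℕ)) : E k (B x) = 0 := by
  conv_lhs => rw [← th_sum hsum x]
  rw [map_sum, map_sum]
  apply Finset.sum_eq_zero
  intro l _
  rcases le_or_gt (l : ℕ) m with h | h
  · have h2 := congrFun (congrArg DFunLike.coe (hz k l (by omega))) x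
    simpa [Module.End.mul_apply] using h2
  · rw [hx l h, map_zero, map_zero]

lemma toMatrix_col (b : Module.Basis (Fin (d + 1)) K V) (f : Module.End K V) (j : Fin (d + 1)) :
    f (b j) = ∑ i, LinearMap.toMatrix b b f i j • b i := by
  conv_lhs => rw [← b.sum_repr (f (b j))]
  simp only [LinearMap.toMatrix_apply]

/-- Core lemma: coordinates with respect to `b` of vectors killed by all high `E k`. -/
lemma th_core (E : Fin (d + 1) → Module.End K V)
    (hsum : ∑ i, E i = 1) (hmul : ∀ i j, E i * E j = if i = j then E i else 0)
    (hne : ∀ i, E i ≠ 0) (hrank : Module.finrank K V = d + 1)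
    (b : Module.Basis (Fin (d + 1)) K V) (m : ℕ)
    (hb : ∀ j : Fin (d + 1), (j : ℕ) ≤ m → ∀ k : Fin (d + 1), m < (k : ℕ) → E k (b j) = 0)
    {x : V} (hx : ∀ k : Fin (d + 1), m < (k : ℕ) → E k x = 0) :
    ∀ i : Fin (d + 1), m < (i : ℕ) → b.repr x i = 0 := by
  haveI : Module.Finite K V := Module.finite_of_finrank_eq_succ hrank
  have hex : ∀ i, ∃ v, E i v ≠ 0 := by
    intro i
    by_contra h
    push_neg at h
    exact hne i (LinearMap.ext fun v => by simpa using h v)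
  choose x0 hx0 using hex
  set w : Fin (d + 1) → V := fun i => E i (x0 i) with hw
  have hEw : ∀ i j, E i (w j) = if i = j then w j else 0 := by
    intro i j
    simpa using th_proj hmul i j (x0 j)
  have hli : LinearIndependent K w := by
    rw [Fintype.linearIndependent_iff]
    intro g hg j
    have h1 : E j (∑ i, g i • w i) = 0 := by rw [hg, map_zero]
    rw [map_sum] at h1
    simp only [map_smul, hEw] at h1
    simp only [smul_ite, smul_zero, Finset.sum_ite_eq, Finset.mem_univ, if_true] at h1
    rcases smul_eq_zero.1 h1 with h | h
    · exact h
    · exact absurd h (hx0 j)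
  have hcardeq : Fintype.card (Fin (d + 1)) = Module.finrank K V := by simp [hrank]
  set B := basisOfLinearIndependentOfCardEqFinrank hli hcardeq with hB
  have hBw : ⇑B = w := coe_basisOfLinearIndependentOfCardEqFinrank hli hcardeq
  have hrepr : ∀ (y : V) (k : Fin (d + 1)), E k y = B.repr y k • w k := by
    intro y k
    conv_lhs => rw [← B.sum_repr y]
    rw [map_sum]
    simp only [map_smul, hBw, hEw]
    simp only [smul_ite, smul_zero, Finset.sum_ite_eq, Finset.mem_univ, if_true]
  set s : Set (Fin (d + 1)) := {j | (j : ℕ) ≤ m} with hs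
  set q := Submodule.span K (w '' s) with hq
  set p := Submodule.span K (⇑b '' s) with hp
  have hmemq : ∀ y : V, (∀ k : Fin (d + 1), m < (k : ℕ) → E k y = 0) → y ∈ q := by
    intro y hy
    rw [← B.sum_repr y]
    apply Submodule.sum_mem
    intro k _
    rcases le_or_gt (k : ℕ) m with h | h
    · exact Submodule.smul_mem _ _ (Submodule.subset_span ⟨k, h, (congrFun hBw k).symm⟩)
    · have h0 : B.repr y k = 0 := by
        have := hrepr y k
        rw [hy k h] at this
        rcases smul_eq_zero.1 this.symm with h' | h'
        · exact h'
        · exact absurd h' (hx0 k)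
      rw [h0, zero_smul]
      exact Submodule.zero_mem _
  have hcard : ∀ (u : Fin (d + 1) → V), LinearIndependent K u →
      Module.finrank K (Submodule.span K (u '' s)) = Fintype.card s := by
    intro u hu
    have h1 : LinearIndependent K (u ∘ (Subtype.val : s → Fin (d + 1))) :=
      hu.comp _ Subtype.val_injective
    have h2 := finrank_span_eq_card h1
    rwa [Set.range_comp, Subtype.range_coe] at h2
  have hpq : p ≤ q := by
    rw [hp, Submodule.span_le]
    rintro _ ⟨j, hj, rfl⟩
    exact hmemq (b j) (hb j hj)
  have hfr : Module.finrank K q ≤ Module.finrank K p := by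
    rw [hcard w hli, hcard ⇑b b.linearIndependent]
  have hpeq : p = q := Submodule.eq_of_le_of_finrank_le hpq hfr
  have hxp : x ∈ p := hpeq ▸ hmemq x hx
  intro i hi
  have hker : p ≤ LinearMap.ker (b.coord i) := by
    rw [hp, Submodule.span_le]
    rintro _ ⟨j, hj, rfl⟩
    have hjm : (j : ℕ) ≤ m := hj
    have hji : j ≠ i := fun h => by subst h; omega
    simp [LinearMap.mem_ker, Module.Basis.coord_apply, Module.Basis.repr_self,
      Finsupp.single_eq_of_ne' hji]
  have := hker hxp
  simpa [Module.Basis.coord_apply] using this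

end Helpers



/-- A thin Hessenberg system on `V`: multiplicity-free `A`, `Astar` with
orderings of primitive idempotents `E`, `Estar` (eigenvalues `θ`, `θs`)
satisfying the Hessenberg conditions. -/
structure THSystem (K V : Type*) [Field K] [AddCommGroup V] [Module K V] (d : ℕ) where
  A : Module.End K V
  Astar : Module.End K V
  E : Fin (d + 1) → Module.End K V
  Estar : Fin (d + 1) → Module.End K V
  θ : Fin (d + 1) → K
  θs : Fin (d + 1) → K
  finrank_eq : Module.finrank K V = d + 1
  θ_inj : Function.Injective θ
  θs_inj : Function.Injective θs
  sum_E : ∑ i, E i = 1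
  E_mul : ∀ i j, E i * E j = if i = j then E i else 0
  E_ne : ∀ i, E i ≠ 0
  sum_Es : ∑ i, Estar i = 1
  Es_mul : ∀ i j, Estar i * Estar j = if i = j then Estar i else 0
  Es_ne : ∀ i, Estar i ≠ 0
  A_eq : A = ∑ i, θ i • E i
  As_eq : Astar = ∑ i, θs i • Estar i
  EAsE_zero : ∀ i j : Fin (d + 1), (j : ℕ) + 1 < (i : ℕ) → E i * Astar * E j = 0
  EAsE_ne : ∀ i j : Fin (d + 1), (i : ℕ) = (j : ℕ) + 1 → E i * Astar * E j ≠ 0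
  EsAEs_zero : ∀ i j : Fin (d + 1), (j : ℕ) + 1 < (i : ℕ) → Estar i * A * Estar j = 0
  EsAEs_ne : ∀ i j : Fin (d + 1), (i : ℕ) = (j : ℕ) + 1 → Estar i * A * Estar j ≠ 0
/-- `v` has the form of a `Φ`-split basis:
`v_d` is a nonzero element of `E_0 V` and `v_i = (A* - θ*_{i+1} I) v_{i+1}`. -/
def IsSplitFamily {K V : Type*} [Field K] [AddCommGroup V] [Module K V] {d : ℕ}
    (Φ : THSystem K V d) (v : Fin (d + 1) → V) : Prop :=
  v (Fin.last d) ≠ 0 ∧ v (Fin.last d) ∈ LinearMap.range (Φ.E 0) ∧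
  ∀ i : ℕ, ∀ h : i < d, v ⟨i, by omega⟩ =
    (Φ.Astar - Φ.θs ⟨i + 1, by omega⟩ • (1 : Module.End K V)) (v ⟨i + 1, by omega⟩)

/-- A `Φ`-split basis for `V`. -/
def IsSplitBasis {K V : Type*} [Field K] [AddCommGroup V] [Module K V] {d : ℕ}
    (Φ : THSystem K V d) (v : Fin (d + 1) → V) : Prop :=
  LinearIndependent K v ∧ Submodule.span K (Set.range v) = ⊤ ∧ IsSplitFamily Φ v
/-- A square matrix is lower bidiagonal whenever each nonzero entry lies on the
diagonal or the subdiagonal, and each subdiagonal entry is nonzero. -/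
def IsLowerBidiagonal {K : Type*} [Field K] {n : ℕ} (C : Matrix (Fin n) (Fin n) K) : Prop :=
  (∀ i j : Fin n, (i : ℕ) ≠ (j : ℕ) → (i : ℕ) ≠ (j : ℕ) + 1 → C i j = 0) ∧
  (∀ i j : Fin n, (i : ℕ) = (j : ℕ) + 1 → C i j ≠ 0)

/-- A square matrix is upper bidiagonal whenever its transpose is lower bidiagonal. -/
def IsUpperBidiagonal {K : Type*} [Field K] {n : ℕ} (C : Matrix (Fin n) (Fin n) K) : Prop :=
  IsLowerBidiagonal C.transpose

/-- A basis `b` is a `Φ`-split basis iff the matrix `C` of `A` is lower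
bidiagonal, the matrix `C*` of `A*` is upper bidiagonal with superdiagonal
entries `1`, and `C_{dd} = θ_0`, `C*_{00} = θ*_0`. -/
theorem splitBasis_matrix_characterization {K V : Type*} [Field K] [AddCommGroup V]
    [Module K V] {d : ℕ} (Φ : THSystem K V d) (b : Module.Basis (Fin (d + 1)) K V) :
    IsSplitBasis Φ ⇑b ↔
      (IsLowerBidiagonal (LinearMap.toMatrix b b Φ.A) ∧
       IsUpperBidiagonal (LinearMap.toMatrix b b Φ.Astar) ∧
       (∀ i : Fin (d + 1), ∀ hi : 1 ≤ (i : ℕ),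
         LinearMap.toMatrix b b Φ.Astar ⟨(i : ℕ) - 1, by have := i.isLt; omega⟩ i = 1) ∧
       LinearMap.toMatrix b b Φ.A (Fin.last d) (Fin.last d) = Φ.θ 0 ∧
       LinearMap.toMatrix b b Φ.Astar 0 0 = Φ.θs 0) := by
  classical
  have hMrepr : ∀ i j : Fin (d + 1), LinearMap.toMatrix b b Φ.A i j = b.repr (Φ.A (b j)) i :=
    fun i j => LinearMap.toMatrix_apply b b Φ.A i j
  have hMsrepr : ∀ i j : Fin (d + 1),
      LinearMap.toMatrix b b Φ.Astar i j = b.repr (Φ.Astar (b j)) i :=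
    fun i j => LinearMap.toMatrix_apply b b Φ.Astar i j
  constructor
  · intro hS
    obtain ⟨hli, hspan, hne0, hmem, hrec⟩ :
        LinearIndependent K ⇑b ∧ Submodule.span K (Set.range ⇑b) = ⊤ ∧
        (b (Fin.last d) ≠ 0 ∧ b (Fin.last d) ∈ LinearMap.range (Φ.E 0) ∧
         ∀ i : ℕ, ∀ h : i < d, b ⟨i, by omega⟩ =
           (Φ.Astar - Φ.θs ⟨i + 1, by omega⟩ • (1 : Module.End K V)) (b ⟨i + 1, by omega⟩)) := hS
    have hrec' : ∀ i : ℕ, ∀ h : i < d, Φ.Astar (b ⟨i + 1, by omega⟩) =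
        b ⟨i, by omega⟩ + Φ.θs ⟨i + 1, by omega⟩ • b ⟨i + 1, by omega⟩ := by
      intro i h
      rw [hrec i h]
      simp only [LinearMap.sub_apply, LinearMap.smul_apply, Module.End.one_apply]
      abel
    have f1 : ∀ j k : Fin (d + 1), (j : ℕ) < (k : ℕ) → Φ.Estar k (b j) = 0 := by
      have key : ∀ n : ℕ, ∀ j : Fin (d + 1), d - (j : ℕ) ≤ n →
          ∀ k : Fin (d + 1), (j : ℕ) < (k : ℕ) → Φ.Estar k (b j) = 0 := by
        intro n
        induction n with
        | zero =>
          intro j hj k hk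
          exact absurd hk (by have := k.isLt; omega)
        | succ n ih =>
          intro j hj k hk
          rcases le_or_gt (d - (j : ℕ)) n with h | h
          · exact ih j h k hk
          · have hjd : (j : ℕ) < d := by have := j.isLt; omega
            have h3 : b j = Φ.Astar (b ⟨(j : ℕ) + 1, by omega⟩)
                - Φ.θs ⟨(j : ℕ) + 1, by omega⟩ • b ⟨(j : ℕ) + 1, by omega⟩ := by
              conv_lhs => rw [← Fin.eta j j.isLt]
              rw [hrec' (j : ℕ) hjd]
              abel
            have h2 : Φ.Estar k (b j) = (Φ.θs k - Φ.θs ⟨(j : ℕ) + 1, by omega⟩) •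
                Φ.Estar k (b ⟨(j : ℕ) + 1, by omega⟩) := by
              rw [h3, map_sub, map_smul, th_proj_A Φ.As_eq Φ.Es_mul, sub_smul]
            rcases Nat.lt_or_ge ((j : ℕ) + 1) (k : ℕ) with hk2 | hk2
            · rw [h2, ih ⟨(j : ℕ) + 1, by omega⟩ (show d - ((j : ℕ) + 1) ≤ n by omega) k hk2,
                smul_zero]
            · have hkj : k = ⟨(j : ℕ) + 1, by omega⟩ := Fin.ext (by first | omega | (simp only [Fin.val_mk]; omega))
              rw [h2, hkj, sub_self, zero_smul]
      intro j k hk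
      exact key d j (by omega) k hk
    have f1' : ∀ n : ℕ, n ≤ d → ∀ k : Fin (d + 1), n < (k : ℕ) →
        Φ.E k (b ⟨d - n, by omega⟩) = 0 := by
      intro n
      induction n with
      | zero =>
        intro _ k hk
        obtain ⟨y, hy⟩ := LinearMap.mem_range.1 hmem
        have hb0 : b ⟨d - 0, by omega⟩ = Φ.E 0 y := by
          rw [hy]
          exact congrArg b (Fin.ext (by simp))
        rw [hb0, th_proj Φ.E_mul, if_neg]
        intro hk0
        rw [hk0] at hk
        simp at hk
      | succ n ih =>
        intro hn k hk
        have hnd : n < d := by omega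
        have h3 : b ⟨d - (n + 1), by omega⟩ = Φ.Astar (b ⟨d - n, by omega⟩)
            - Φ.θs ⟨d - n, by omega⟩ • b ⟨d - n, by omega⟩ := by
          have hr := hrec' (d - (n + 1)) (by omega)
          have e1 : (⟨d - (n + 1) + 1, by omega⟩ : Fin (d + 1)) = ⟨d - n, by omega⟩ :=
            Fin.ext (by first | omega | (simp only [Fin.val_mk]; omega))
          rw [e1] at hr
          rw [hr]
          abel
        rw [h3, map_sub, map_smul]
        rw [th_EA_zero Φ.sum_E Φ.EAsE_zero (fun l hl => ih (by omega) l hl)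
          (show n + 1 < (k : ℕ) from hk)]
        rw [ih (by omega) k (by omega), smul_zero, sub_zero]
    -- strict lower entries of M vanish
    have hMhi : ∀ i j : Fin (d + 1), (j : ℕ) + 1 < (i : ℕ) →
        LinearMap.toMatrix b b Φ.A i j = 0 := by
      intro i j hij
      rw [hMrepr]
      exact th_core Φ.Estar Φ.sum_Es Φ.Es_mul Φ.Es_ne Φ.finrank_eq b ((j : ℕ) + 1)
        (fun jj hjj k hk => f1 jj k (by omega))
        (fun k hk => th_EA_zero Φ.sum_Es Φ.EsAEs_zero (fun l hl => f1 j l hl) (by omega)) i hij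
    have hMlo : ∀ i j : Fin (d + 1), (i : ℕ) < (j : ℕ) →
        LinearMap.toMatrix b b Φ.A i j = 0 := by
      intro i j hij
      have hjd : (j : ℕ) ≤ d := by have := j.isLt; omega
      have hcore := th_core Φ.E Φ.sum_E Φ.E_mul Φ.E_ne Φ.finrank_eq
        (b.reindex ⟨Fin.rev, Fin.rev, Fin.rev_rev, Fin.rev_rev⟩) (d - (j : ℕ))
        (fun jj hjj k hk => by
          rw [Module.Basis.reindex_apply]
          have e2 : (⟨Fin.rev, Fin.rev, Fin.rev_rev, Fin.rev_rev⟩ :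
              Fin (d + 1) ≃ Fin (d + 1)).symm jj = ⟨d - (jj : ℕ), by omega⟩ := by
            apply Fin.ext
            show ((Fin.rev jj : Fin (d + 1)) : ℕ) = d - (jj : ℕ)
            rw [Fin.val_rev]
            omega
          rw [e2]
          exact f1' (jj : ℕ) (by have := jj.isLt; omega) k (by omega))
        (x := Φ.A (b j))
        (fun k hk => by
          rw [th_proj_A Φ.A_eq Φ.E_mul]
          have h := f1' (d - (j : ℕ)) (by omega) k (by omega)
          rw [show (⟨d - (d - (j : ℕ)), by omega⟩ : Fin (d + 1)) = j
            from Fin.ext (by first | omega | (simp only [Fin.val_mk]; omega))] at h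
          rw [h, smul_zero])
      have h2 := hcore (Fin.rev i) (by rw [Fin.val_rev]; omega)
      rw [Module.Basis.repr_reindex_apply] at h2
      have e3 : (⟨Fin.rev, Fin.rev, Fin.rev_rev, Fin.rev_rev⟩ :
          Fin (d + 1) ≃ Fin (d + 1)).symm (Fin.rev i) = i := Fin.rev_rev i
      rw [e3] at h2
      rw [hMrepr]
      exact h2
    -- the A* column formulas
    have hAs0 : Φ.Astar (b 0) = Φ.θs 0 • b 0 := by
      have h0 : ∀ k, k ≠ (0 : Fin (d + 1)) → Φ.Estar k (b 0) = 0 := by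
        intro k hk
        refine f1 0 k ?_
        have : (k : ℕ) ≠ 0 := fun h => hk (Fin.ext (by simpa using h))
        simp only [Fin.val_zero]
        omega
      have hb00 : Φ.Estar 0 (b 0) = b 0 := th_self Φ.sum_Es h0
      calc Φ.Astar (b 0) = Φ.Astar (Φ.Estar 0 (b 0)) := by rw [hb00]
        _ = Φ.θs 0 • Φ.Estar 0 (b 0) := th_A_proj Φ.As_eq Φ.Es_mul 0 (b 0)
        _ = Φ.θs 0 • b 0 := by rw [hb00]
    have hAscol : ∀ c : Fin (d + 1), 0 < (c : ℕ) →
        Φ.Astar (b c) = b ⟨(c : ℕ) - 1, by have := c.isLt; omega⟩ + Φ.θs c • b c := by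
      intro c hc
      have hcd : (c : ℕ) - 1 < d := by have := c.isLt; omega
      have hr := hrec' ((c : ℕ) - 1) hcd
      have e1 : (⟨(c : ℕ) - 1 + 1, by omega⟩ : Fin (d + 1)) = c := Fin.ext (by first | omega | (simp only [Fin.val_mk]; omega))
      rw [e1] at hr
      exact hr
    have hMsval : ∀ r c : Fin (d + 1), LinearMap.toMatrix b b Φ.Astar r c =
        (if 0 < (c : ℕ) ∧ (r : ℕ) + 1 = (c : ℕ) then 1 else 0) +
        (if r = c then Φ.θs c else 0) := by
      intro r c
      rcases Nat.eq_zero_or_pos (c : ℕ) with hc | hc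
      · have hc0 : c = 0 := Fin.ext (by simpa using hc)
        subst hc0
        rw [hMsrepr, hAs0, map_smul, Module.Basis.repr_self]
        by_cases hr : r = 0
        · subst hr
          simp [Finsupp.single_apply]
        · have hr' : (0 : Fin (d + 1)) ≠ r := fun h => hr h.symm
          simp [Finsupp.single_apply, hr', hr, Fin.val_zero]
      · rw [hMsrepr, hAscol c hc, map_add, map_smul, Module.Basis.repr_self, Module.Basis.repr_self]
        simp only [Finsupp.coe_add, Pi.add_apply, Finsupp.coe_smul, Pi.smul_apply,
          Finsupp.single_apply, smul_eq_mul]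
        congr 1
        · by_cases h : (r : ℕ) + 1 = (c : ℕ)
          · rw [if_pos (show (⟨(c : ℕ) - 1, by have := c.isLt; omega⟩ : Fin (d + 1)) = r
              from Fin.ext (by first | omega | (simp only [Fin.val_mk]; omega))), if_pos ⟨hc, h⟩]
          · rw [if_neg, if_neg (by tauto)]
            intro hh
            have := congrArg Fin.val hh
            simp only at this
            omega
        · by_cases h : c = r
          · subst h
            rw [if_pos rfl, if_pos rfl, mul_one]
          · rw [if_neg h, if_neg (fun hh => h hh.symm), mul_zero]
    have hMdd : LinearMap.toMatrix b b Φ.A (Fin.last d) (Fin.last d) = Φ.θ 0 := by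
      obtain ⟨y, hy⟩ := LinearMap.mem_range.1 hmem
      have hAld : Φ.A (b (Fin.last d)) = Φ.θ 0 • b (Fin.last d) := by
        rw [← hy, th_A_proj Φ.A_eq Φ.E_mul, hy]
      rw [hMrepr, hAld, map_smul, Module.Basis.repr_self]
      simp
    refine ⟨⟨fun i j h1 h2 => ?_, fun i j hij => ?_⟩,
      ⟨fun i j h1 h2 => ?_, fun i j hij => ?_⟩, fun i hi => ?_, hMdd, ?_⟩
    · rcases Nat.lt_trichotomy (i : ℕ) (j : ℕ) with h | h | h
      · exact hMlo i j h
      · exact absurd h h1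
      · exact hMhi i j (by omega)
    · -- subdiagonal of M is nonzero
      intro h0
      have hjd : (j : ℕ) < d := by have := i.isLt; omega
      refine Φ.EsAEs_ne i j hij (LinearMap.ext fun x => ?_)
      simp only [Module.End.mul_apply, LinearMap.zero_apply]
      have hyr := th_core Φ.Estar Φ.sum_Es Φ.Es_mul Φ.Es_ne Φ.finrank_eq b (j : ℕ)
        (fun jj hjj k hk => f1 jj k (by omega))
        (x := Φ.Estar j x)
        (fun k hk => by
          rw [th_proj Φ.Es_mul, if_neg]
          intro h
          rw [h] at hk
          omega)
      conv_lhs => rw [← b.sum_repr (Φ.Estar j x)]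
      rw [map_sum, map_sum]
      apply Finset.sum_eq_zero
      intro l _
      rw [map_smul, map_smul]
      rcases le_or_gt (l : ℕ) (j : ℕ) with hl | hl
      · have hz : Φ.Estar i (Φ.A (b l)) = 0 := by
          rw [toMatrix_col b Φ.A l, map_sum]
          apply Finset.sum_eq_zero
          intro t _
          rw [map_smul]
          rcases Nat.lt_trichotomy (t : ℕ) (i : ℕ) with ht | ht | ht
          · rw [f1 t i (by omega), smul_zero]
          · have htl : LinearMap.toMatrix b b Φ.A t l = 0 := by
              rcases Nat.lt_or_ge (l : ℕ) (j : ℕ) with hl2 | hl2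
              · exact hMhi t l (by omega)
              · have hlj : l = j := Fin.ext (by first | omega | (simp only [Fin.val_mk]; omega))
                have hti : t = i := Fin.ext ht
                rw [hlj, hti]
                exact h0
            rw [htl, zero_smul]
          · rw [hMhi t l (by omega), zero_smul]
        rw [hz, smul_zero]
      · rw [hyr l hl, zero_smul]
    · -- upper bidiagonal zero entries of Ms
      rw [Matrix.transpose_apply, hMsval]
      rw [if_neg, if_neg]
      · simp
      · intro hh
        rw [hh] at h1
        exact h1 rfl
      · rintro ⟨-, hh⟩
        exact h2 hh.symm
    · -- superdiagonal of Ms nonzero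
      rw [Matrix.transpose_apply, hMsval]
      rw [if_pos ⟨by omega, by omega⟩, if_neg]
      · simp
      · intro hh
        have := congrArg Fin.val hh
        omega
    · -- superdiagonal of Ms equals 1
      rw [hMsval]
      rw [if_pos ⟨by omega, by simp only [Fin.val_mk]; omega⟩, if_neg]
      · simp
      · intro hh
        have := congrArg Fin.val hh
        simp only [Fin.val_mk] at this
        omega
    · -- Ms 0 0 = θs 0
      rw [hMsval]
      rw [if_neg (by simp), if_pos rfl]
      simp
  · intro hyp
    obtain ⟨h1, h2, hsup, hMdd, hMs00⟩ := hyp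
    obtain ⟨hMz, hMsub⟩ := h1
    obtain ⟨hMsz0, hMssub⟩ := h2
    have hMsz : ∀ r c : Fin (d + 1), (c : ℕ) ≠ (r : ℕ) → (c : ℕ) ≠ (r : ℕ) + 1 →
        LinearMap.toMatrix b b Φ.Astar r c = 0 := by
      intro r c hc1 hc2
      have := hMsz0 c r hc1 hc2
      simpa [Matrix.transpose_apply] using this
    -- A acts on the last basis vector as θ 0
    have c1 : Φ.A (b (Fin.last d)) = Φ.θ 0 • b (Fin.last d) := by
      rw [toMatrix_col b Φ.A (Fin.last d)]
      rw [Finset.sum_eq_single (Fin.last d)]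
      · rw [hMdd]
      · intro t _ ht
        have h3 : (t : ℕ) ≠ d := fun h => ht (Fin.ext (by simpa using h))
        rw [hMz t (Fin.last d) (by simpa using h3) (by have := t.isLt; simp only [Fin.val_last]; omega), zero_smul]
      · intro h
        exact absurd (Finset.mem_univ _) h
    have cE0 : ∀ k, k ≠ (0 : Fin (d + 1)) → Φ.E k (b (Fin.last d)) = 0 :=
      th_eig Φ.A_eq Φ.E_mul Φ.θ_inj c1
    -- A* acts on the first basis vector as θs 0
    have c3 : Φ.Astar (b 0) = Φ.θs 0 • b 0 := by
      rw [toMatrix_col b Φ.Astar 0]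
      rw [Finset.sum_eq_single (0 : Fin (d + 1))]
      · rw [hMs00]
      · intro t _ ht
        have h3 : (t : ℕ) ≠ 0 := fun h => ht (Fin.ext (by simpa using h))
        rw [hMsz t 0 (by simpa using h3.symm) (by simp), zero_smul]
      · intro h
        exact absurd (Finset.mem_univ _) h
    have cEs0 : ∀ k, k ≠ (0 : Fin (d + 1)) → Φ.Estar k (b 0) = 0 :=
      th_eig Φ.As_eq Φ.Es_mul Φ.θs_inj c3
    -- column formula for A*
    have c4 : ∀ t : ℕ, ∀ ht : t < d, Φ.Astar (b ⟨t + 1, by omega⟩) = b ⟨t, by omega⟩ +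
        LinearMap.toMatrix b b Φ.Astar ⟨t + 1, by omega⟩ ⟨t + 1, by omega⟩ •
          b ⟨t + 1, by omega⟩ := by
      intro t ht
      rw [toMatrix_col b Φ.Astar ⟨t + 1, by omega⟩]
      have hcoef : ∀ i : Fin (d + 1), LinearMap.toMatrix b b Φ.Astar i ⟨t + 1, by omega⟩ =
          (if i = ⟨t, by omega⟩ then 1 else 0) +
          (if i = ⟨t + 1, by omega⟩ then
            LinearMap.toMatrix b b Φ.Astar ⟨t + 1, by omega⟩ ⟨t + 1, by omega⟩ else 0) := by
        intro i
        by_cases ha : i = ⟨t, by omega⟩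
        · subst ha
          rw [if_pos rfl, if_neg (fun h => by have := congrArg Fin.val h; simp only [Fin.val_mk] at this; omega)]
          rw [add_zero]
          exact hsup ⟨t + 1, by omega⟩ (by simp only [Fin.val_mk]; omega)
        · rw [if_neg ha]
          by_cases hb2 : i = ⟨t + 1, by omega⟩
          · subst hb2
            rw [if_pos rfl, zero_add]
          · rw [if_neg hb2, add_zero]
            refine hMsz i ⟨t + 1, by omega⟩ ?_ ?_
            · intro h
              exact hb2 (Fin.ext (by simpa using h.symm))
            · intro h
              exact ha (Fin.ext (by simp only [Fin.val_mk] at h ⊢; omega))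
      rw [Finset.sum_congr rfl fun i _ => by rw [hcoef i]]
      simp [add_smul, ite_smul, zero_smul, Finset.sum_add_distrib, Finset.sum_ite_eq']
    -- the flag property
    have P : ∀ k : ℕ, ∀ j : Fin (d + 1), (j : ℕ) ≤ k → ∀ i : Fin (d + 1), k < (i : ℕ) →
        Φ.Estar i (b j) = 0 := by
      intro k
      induction k with
      | zero =>
        intro j hj i hi
        have hj0 : j = 0 := Fin.ext (by simp only [Fin.val_zero]; omega)
        subst hj0
        exact cEs0 i (fun h => by rw [h] at hi; simp at hi)
      | succ k ih =>
        intro j hj i hi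
        rcases le_or_gt (j : ℕ) k with h | h
        · exact ih j h i (by omega)
        · have hkd : k < d := by have := j.isLt; omega
          have hj1 : j = ⟨k + 1, by omega⟩ := Fin.ext (by first | omega | (simp only [Fin.val_mk]; omega))
          rw [hj1]
          have hz : Φ.Estar i (Φ.A (b ⟨k, by omega⟩)) = 0 :=
            th_EA_zero Φ.sum_Es Φ.EsAEs_zero
              (fun l hl => ih ⟨k, by omega⟩ (le_refl k) l hl)
              (show k + 1 < (i : ℕ) by omega)
          rw [toMatrix_col b Φ.A ⟨k, by omega⟩, map_sum] at hz
          simp only [map_smul] at hz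
          rw [Finset.sum_eq_single (⟨k + 1, by omega⟩ : Fin (d + 1))] at hz
          · rcases smul_eq_zero.1 hz with h' | h'
            · exact absurd h' (hMsub ⟨k + 1, by omega⟩ ⟨k, by omega⟩ rfl)
            · exact h'
          · intro l _ hl
            rcases Nat.lt_trichotomy (l : ℕ) (k + 1) with h2 | h2 | h2
            · rw [ih l (by omega) i (by omega), smul_zero]
            · exact absurd (Fin.ext h2) hl
            · rw [hMz l ⟨k, by omega⟩ (show (l : ℕ) ≠ k by omega)
                (show (l : ℕ) ≠ k + 1 by omega), zero_smul]
          · intro h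
            exact absurd (Finset.mem_univ _) h
    -- nondegeneracy on the diagonal
    have c6 : ∀ t : ℕ, ∀ ht : t < d,
        Φ.Estar ⟨t + 1, by omega⟩ (b ⟨t + 1, by omega⟩) ≠ 0 := by
      intro t ht hEk
      refine Φ.EsAEs_ne ⟨t + 1, by omega⟩ ⟨t, by omega⟩ rfl (LinearMap.ext fun x => ?_)
      simp only [Module.End.mul_apply, LinearMap.zero_apply]
      have hyr := th_core Φ.Estar Φ.sum_Es Φ.Es_mul Φ.Es_ne Φ.finrank_eq b t
        (fun jj hjj k hk => P t jj hjj k hk)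
        (x := Φ.Estar ⟨t, by omega⟩ x)
        (fun k hk => by
          rw [th_proj Φ.Es_mul, if_neg]
          intro h
          have := congrArg Fin.val h
          simp only at this
          omega)
      conv_lhs => rw [← b.sum_repr (Φ.Estar ⟨t, by omega⟩ x)]
      rw [map_sum, map_sum]
      apply Finset.sum_eq_zero
      intro l _
      rw [map_smul, map_smul]
      rcases le_or_gt (l : ℕ) t with hl | hl
      · have hz : Φ.Estar ⟨t + 1, by omega⟩ (Φ.A (b l)) = 0 := by
          rw [toMatrix_col b Φ.A l, map_sum]
          apply Finset.sum_eq_zero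
          intro s _
          rw [map_smul]
          rcases Nat.lt_trichotomy (s : ℕ) (t + 1) with hs | hs | hs
          · rw [P t s (by omega) ⟨t + 1, by omega⟩ (by simp only [Fin.val_mk]; omega), smul_zero]
          · have hseq : s = ⟨t + 1, by omega⟩ := Fin.ext hs
            rw [hseq, hEk, smul_zero]
          · rw [hMz s l (show (s : ℕ) ≠ (l : ℕ) by omega)
              (show (s : ℕ) ≠ (l : ℕ) + 1 by omega), zero_smul]
        rw [hz, smul_zero]
      · rw [hyr l hl, zero_smul]
    -- the diagonal of Ms
    have c7 : ∀ t : ℕ, ∀ ht : t < d,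
        LinearMap.toMatrix b b Φ.Astar ⟨t + 1, by omega⟩ ⟨t + 1, by omega⟩ =
          Φ.θs ⟨t + 1, by omega⟩ := by
      intro t ht
      have h5 := congrArg (Φ.Estar ⟨t + 1, by omega⟩) (c4 t ht)
      rw [th_proj_A Φ.As_eq Φ.Es_mul, map_add, map_smul] at h5
      rw [P t ⟨t, by omega⟩ (le_refl t) ⟨t + 1, by omega⟩ (by simp only [Fin.val_mk]; omega), zero_add] at h5
      have h6 : (Φ.θs ⟨t + 1, by omega⟩ -
          LinearMap.toMatrix b b Φ.Astar ⟨t + 1, by omega⟩ ⟨t + 1, by omega⟩) •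
          Φ.Estar ⟨t + 1, by omega⟩ (b ⟨t + 1, by omega⟩) = 0 := by
        rw [sub_smul, h5, sub_self]
      rcases smul_eq_zero.1 h6 with h' | h'
      · exact (sub_eq_zero.1 h').symm
      · exact absurd h' (c6 t ht)
    refine ⟨b.linearIndependent, b.span_eq, b.ne_zero _,
      LinearMap.mem_range.2 ⟨b (Fin.last d), th_self Φ.sum_E cE0⟩, ?_⟩
    intro i h
    rw [LinearMap.sub_apply, LinearMap.smul_apply, Module.End.one_apply]
    rw [c4 i h, c7 i h]
    abel
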